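/- Let n ≥ 1, N = 2^n, and let x ∈ ℂ^N be a vector with polar decomposition x_i = r_i e^{iθ_i}, r_i ≥ 0, θ_i ∈ [0,2π), not all r_i zero. Set α_i = arccos(r_i / max_j r_j). Let ε > 0, and set t = 2n + ⌈log₂(2π/ε)⌉ and t' = n + 1 + ⌈log₂(2π/ε)⌉. Suppose α̃_i ∈ ℝ satisfy 0 ≤ α̃_i ≤ α_i and α_i − α̃_i < π/2^{t+1}, and θ̃_i ∈ ℝ satisfy |θ_i − θ̃_i| ≤ 2π/2^{t'}. Define x̃ ∈ ℂ^N by x̃_i = e^{iθ̃_i}·cos α̃_i / √(Σ_j cos² α̃_j). Then: (i) (1/2^n)·Σ_i cos² α̃_i ≥ ‖x‖²/(2^n · max_i r_i²), and (ii) ‖x/‖x‖ − x̃‖ ≤ ε. -/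

import Mathlib

open Finset in
lemma l2tri {ι : Type*} [Fintype ι] (f g : ι → ℂ) :
    Real.sqrt (∑ i, ‖f i + g i‖ ^ 2) ≤
      Real.sqrt (∑ i, ‖f i‖ ^ 2) + Real.sqrt (∑ i, ‖g i‖ ^ 2) := by
  have h := norm_add_le (E := EuclideanSpace ℂ ι) (WithLp.toLp 2 f)
    (WithLp.toLp 2 g)
  simpa [EuclideanSpace.norm_eq] using h

lemma abs_cos_sub_cos_le (a b : ℝ) : |Real.cos a - Real.cos b| ≤ |a - b| := by
  rw [Real.cos_sub_cos]
  calc |(-2) * Real.sin ((a + b) / 2) * Real.sin ((a - b) / 2)|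
      = 2 * |Real.sin ((a + b) / 2)| * |Real.sin ((a - b) / 2)| := by
        rw [abs_mul, abs_mul]; norm_num
    _ ≤ 2 * 1 * |(a - b) / 2| := by
        have h1 : |Real.sin ((a + b) / 2)| ≤ 1 := Real.abs_sin_le_one _
        have h2 : |Real.sin ((a - b) / 2)| ≤ |(a - b) / 2| := Real.abs_sin_le_abs
        have h3 : (0:ℝ) ≤ |Real.sin ((a - b) / 2)| := abs_nonneg _
        nlinarith [abs_nonneg ((a - b) / 2)]
    _ = |a - b| := by rw [abs_div]; simp [abs_of_nonneg]; ring
lemma abs_exp_I_sub_exp_I_le (a b : ℝ) :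
    ‖Complex.exp (a * Complex.I) - Complex.exp (b * Complex.I)‖ ≤ |a - b| := by
  have h : Complex.exp (a * Complex.I) - Complex.exp (b * Complex.I)
      = Complex.exp (b * Complex.I) * (Complex.exp (((a - b) : ℝ) * Complex.I) - 1) := by
    rw [mul_sub, mul_one, ← Complex.exp_add]
    push_cast; ring_nf
  rw [h, norm_mul, Complex.norm_exp_ofReal_mul_I, one_mul]
  set c := a - b
  have h2 : Complex.exp ((c : ℝ) * Complex.I) - 1
      = (Real.cos c - 1 : ℝ) + (Real.sin c : ℝ) * Complex.I := by
    rw [Complex.exp_mul_I]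
    push_cast; ring
  rw [h2]
  have h3 : ‖(Real.cos c - 1 : ℝ) + (Real.sin c : ℝ) * Complex.I‖
      = Real.sqrt ((Real.cos c - 1) ^ 2 + Real.sin c ^ 2) := by
    rw [Complex.norm_add_mul_I]
  rw [h3]
  have h4 : (Real.cos c - 1) ^ 2 + Real.sin c ^ 2 = 2 - 2 * Real.cos c := by
    have := Real.sin_sq_add_cos_sq c; nlinarith
  rw [h4]
  have h5 : 2 - 2 * Real.cos c = (2 * |Real.sin (c / 2)|) ^ 2 := by
    rw [mul_pow, sq_abs]
    have hcc : Real.cos c = 2 * Real.cos (c / 2) ^ 2 - 1 := by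
      have h2 := Real.cos_two_mul (c / 2)
      rw [show 2 * (c / 2) = c by ring] at h2
      linarith
    nlinarith [Real.sin_sq_add_cos_sq (c / 2)]
  rw [h5, Real.sqrt_sq (by positivity)]
  calc 2 * |Real.sin (c / 2)| ≤ 2 * |c / 2| := by
        have := Real.abs_sin_le_abs (x := c / 2); linarith
    _ = |c| := by rw [abs_div]; simp [abs_of_nonneg]; ring


lemma helper_sq_diff (a b d : ℝ) (h0 : 0 ≤ a) (hab : a ≤ b) (hb1 : b ≤ 1)
    (hd : b - a ≤ d) : b ^ 2 - a ^ 2 ≤ 2 * d := by nlinarith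

lemma helper_sqrt_diff (a b : ℝ) (h1 : 1 ≤ a) (hab : a ≤ b) :
    b - a ≤ (b ^ 2 - a ^ 2) / 2 := by nlinarith

lemma helper_mul_sq (a c e : ℝ) (h0 : 0 ≤ a) (ha : a ≤ e) (hc : 0 ≤ c) :
    (a * c) ^ 2 ≤ e ^ 2 * c ^ 2 := by
  have h1 : a ^ 2 ≤ e ^ 2 := by nlinarith
  calc (a * c) ^ 2 = a ^ 2 * c ^ 2 := by ring
    _ ≤ e ^ 2 * c ^ 2 := mul_le_mul_of_nonneg_right h1 (sq_nonneg c)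

lemma helper_pow_sq (p d : ℝ) (hp : 1 ≤ p) (hd : 0 ≤ d) :
    p * d ^ 2 ≤ (p * d) ^ 2 := by nlinarith



/-- The largest entry `max_j x_j` of a vector `x : Fin (2^n) → ℝ`. -/
noncomputable def maxEntry (n : ℕ) (x : Fin (2 ^ n) → ℝ) : ℝ :=
  Finset.univ.sup' ⟨⟨0, Nat.two_pow_pos n⟩, Finset.mem_univ _⟩ x

/-- Overall success probability and fidelity of the probabilistic
state-preparation algorithm for a complex vector `x` with polar decomposition
`x_i = r_i e^{iθ_i}`: with `t = 2n + ⌈log₂(2π/ε)⌉` bits for the amplitudes and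
`t' = n + 1 + ⌈log₂(2π/ε)⌉` bits for the phases,
(i) the success probability `(1/2^n)Σ cos² α̃_i` is at least
`‖x‖²/(2^n·max_i r_i²)`, and (ii) the prepared vector
`x̃_i = e^{iθ̃_i} cos α̃_i / √(Σ_j cos² α̃_j)` satisfies `‖x/‖x‖ − x̃‖ ≤ ε`. -/
theorem probabilistic_preparation_complex (n : ℕ) (hn : 1 ≤ n)
    (x : Fin (2 ^ n) → ℂ)
    (r θ : Fin (2 ^ n) → ℝ) (hr : ∀ i, 0 ≤ r i) (hrne : r ≠ 0)
    (hθr : ∀ i, θ i ∈ Set.Ico 0 (2 * Real.pi))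
    (hx : ∀ i, x i = (r i : ℂ) * Complex.exp (θ i * Complex.I))
    (α : Fin (2 ^ n) → ℝ)
    (hα : ∀ i, α i = Real.arccos (r i / maxEntry n r))
    (ε : ℝ) (hε : 0 < ε) (t t' : ℤ)
    (ht : t = 2 * n + ⌈Real.logb 2 (2 * Real.pi / ε)⌉)
    (ht' : t' = n + 1 + ⌈Real.logb 2 (2 * Real.pi / ε)⌉)
    (αt : Fin (2 ^ n) → ℝ)
    (hαt : ∀ i, 0 ≤ αt i ∧ αt i ≤ α i ∧
      α i - αt i < Real.pi / (2 : ℝ) ^ (t + 1))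
    (θt : Fin (2 ^ n) → ℝ)
    (hθt : ∀ i, |θ i - θt i| ≤ 2 * Real.pi / (2 : ℝ) ^ t')
    (xt : Fin (2 ^ n) → ℂ)
    (hxt : ∀ i, xt i = Complex.exp (θt i * Complex.I) *
      ((Real.cos (αt i) / Real.sqrt (∑ j, Real.cos (αt j) ^ 2) : ℝ) : ℂ)) :
    (∑ i, r i ^ 2) / (2 ^ n * maxEntry n r ^ 2) ≤
      (1 / 2 ^ n) * ∑ i, Real.cos (αt i) ^ 2 ∧
    Real.sqrt (∑ i, ‖x i / (Real.sqrt (∑ j, r j ^ 2) : ℂ) - xt i‖ ^ 2) ≤ ε := by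
  set R := maxEntry n r with hR
  have hle : ∀ i, r i ≤ R := fun i => Finset.le_sup' r (Finset.mem_univ i)
  obtain ⟨i₀, -, hi₀⟩ := Finset.exists_mem_eq_sup' (α := ℝ)
    ⟨⟨0, Nat.two_pow_pos n⟩, Finset.mem_univ _⟩ r
  have hRpos : 0 < R := by
    obtain ⟨j, hj⟩ : ∃ j, r j ≠ 0 := by
      by_contra h; push_neg at h; exact hrne (funext h)
    exact lt_of_lt_of_le ((hr j).lt_of_ne (Ne.symm hj)) (hle j)
  have hcos : ∀ i, Real.cos (α i) = r i / R := by
    intro i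
    rw [hα]
    refine Real.cos_arccos ?_ ((div_le_one hRpos).mpr (hle i))
    have : (0:ℝ) ≤ r i / R := div_nonneg (hr i) hRpos.le
    linarith
  have hαnn : ∀ i, 0 ≤ α i := fun i => (hα i) ▸ Real.arccos_nonneg _
  have hαpi : ∀ i, α i ≤ Real.pi := fun i => (hα i) ▸ Real.arccos_le_pi _
  have hcosle : ∀ i, Real.cos (α i) ≤ Real.cos (αt i) := fun i =>
    Real.cos_le_cos_of_nonneg_of_le_pi (hαt i).1 (hαpi i) (hαt i).2.1
  have hcosnn : ∀ i, 0 ≤ Real.cos (α i) := fun i =>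
    (hcos i) ▸ div_nonneg (hr i) hRpos.le
  have hcostnn : ∀ i, 0 ≤ Real.cos (αt i) := fun i => (hcosnn i).trans (hcosle i)
  have hcost1 : ∀ i, Real.cos (αt i) ≤ 1 := fun i => Real.cos_le_one _
  set S := ∑ i, Real.cos (α i) ^ 2 with hSdef
  set St := ∑ i, Real.cos (αt i) ^ 2 with hStdef
  have hsum : ∑ i, r i ^ 2 = S * R ^ 2 := by
    rw [hSdef, Finset.sum_mul]
    refine Finset.sum_congr rfl fun i _ => ?_
    rw [hcos, div_pow, div_mul_cancel₀ _ (by positivity)]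
  have hS1 : 1 ≤ S := by
    have hre : R = r i₀ := hi₀
    have h1 : Real.cos (α i₀) ^ 2 = 1 := by
      rw [hcos, ← hre, div_self hRpos.ne']; norm_num
    calc (1:ℝ) = Real.cos (α i₀) ^ 2 := h1.symm
      _ ≤ S := Finset.single_le_sum (f := fun i => Real.cos (α i) ^ 2)
          (fun i _ => sq_nonneg _) (Finset.mem_univ i₀)
  have hSSt : S ≤ St :=
    Finset.sum_le_sum fun i _ => pow_le_pow_left₀ (hcosnn i) (hcosle i) 2
  have hSt1 : 1 ≤ St := hS1.trans hSSt
  have hS0 : (0:ℝ) < S := lt_of_lt_of_le one_pos hS1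
  have hSt0 : (0:ℝ) < St := lt_of_lt_of_le one_pos hSt1
  constructor
  · -- part (i)
    rw [hsum]
    have h1 : S * R ^ 2 / (2 ^ n * R ^ 2) = 1 / 2 ^ n * S := by
      field_simp
    rw [h1]
    exact mul_le_mul_of_nonneg_left hSSt (by positivity)
  · -- part (ii)
    set δ := Real.pi / (2:ℝ)^(t+1) with hδdef
    set η := 2 * Real.pi / (2:ℝ)^t' with hηdef
    have hpt : (0:ℝ) < (2:ℝ)^(t+1) := by positivity
    have hpt' : (0:ℝ) < (2:ℝ)^t' := by positivity
    have hδ0 : 0 ≤ δ := by positivity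
    have hη0 : 0 ≤ η := by positivity
    set K := ⌈Real.logb 2 (2 * Real.pi / ε)⌉ with hKdef
    have hπ : (0:ℝ) < Real.pi := Real.pi_pos
    have hK : 2 * Real.pi / ε ≤ (2:ℝ)^K := by
      have h1 : Real.logb 2 (2 * Real.pi / ε) ≤ (K:ℝ) := Int.le_ceil _
      have h2 : (2:ℝ)^(K:ℤ) = (2:ℝ)^((K:ℝ):ℝ) := (Real.rpow_intCast 2 K).symm
      rw [h2]
      calc 2 * Real.pi / ε = (2:ℝ)^(Real.logb 2 (2 * Real.pi / ε)) :=
            (Real.rpow_logb two_pos (by norm_num) (by positivity)).symm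
        _ ≤ (2:ℝ)^((K:ℝ):ℝ) := Real.rpow_le_rpow_of_exponent_le one_le_two h1
    have h2n2 : (2:ℝ) ≤ (2:ℝ)^n := by
      calc (2:ℝ) = 2^1 := (pow_one 2).symm
        _ ≤ 2^n := pow_le_pow_right₀ one_le_two hn
    have h2n0 : (0:ℝ) < (2:ℝ)^n := by positivity
    have h2t1 : ((2:ℝ)^n)^2 * ((2 * Real.pi / ε) * 2) ≤ (2:ℝ)^(t+1) := by
      have he : (2:ℝ)^(t+1) = ((2:ℝ)^n)^2 * ((2:ℝ)^K * 2) := by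
        rw [ht, show 2 * (n:ℤ) + K + 1 = (n:ℤ) + (n:ℤ) + K + 1 by ring,
          zpow_add₀ (two_ne_zero), zpow_add₀ (two_ne_zero), zpow_add₀ (two_ne_zero),
          zpow_one, zpow_natCast]
        ring
      rw [he]
      exact mul_le_mul_of_nonneg_left (by linarith [hK]) (by positivity)
    have hδb : (2:ℝ)^n * δ ≤ ε/8 := by
      have h1 : δ ≤ Real.pi / (((2:ℝ)^n)^2 * ((2 * Real.pi / ε) * 2)) := by
        rw [hδdef]
        gcongr
      have h2 : Real.pi / (((2:ℝ)^n)^2 * ((2 * Real.pi / ε) * 2)) = ε / (4 * ((2:ℝ)^n)^2) := by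
        field_simp
        ring
      rw [h2] at h1
      calc (2:ℝ)^n * δ ≤ (2:ℝ)^n * (ε / (4 * ((2:ℝ)^n)^2)) := by
            exact mul_le_mul_of_nonneg_left h1 h2n0.le
        _ = ε / (4 * (2:ℝ)^n) := by field_simp
        _ ≤ ε / 8 := by
            have h8 : (8:ℝ) ≤ 4 * (2:ℝ)^n := by linarith [h2n2]
            exact div_le_div_of_nonneg_left hε.le (by norm_num) h8
    have hηb : η ≤ ε/4 := by
      have h2t' : (2:ℝ)^n * 2 * (2 * Real.pi / ε) ≤ (2:ℝ)^t' := by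
        have he : (2:ℝ)^t' = (2:ℝ)^n * 2 * (2:ℝ)^K := by
          rw [ht', zpow_add₀ (two_ne_zero), zpow_add₀ (two_ne_zero), zpow_one, zpow_natCast]
        rw [he]
        exact mul_le_mul_of_nonneg_left hK (by positivity)
      have h1 : η ≤ 2 * Real.pi / ((2:ℝ)^n * 2 * (2 * Real.pi / ε)) := by
        rw [hηdef]
        gcongr
      have h2 : 2 * Real.pi / ((2:ℝ)^n * 2 * (2 * Real.pi / ε)) = ε / ((2:ℝ)^n * 2) := by
        field_simp
      rw [h2] at h1
      calc η ≤ ε / ((2:ℝ)^n * 2) := h1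
        _ ≤ ε / 4 := by
            have h4 : (4:ℝ) ≤ (2:ℝ)^n * 2 := by linarith [h2n2]
            exact div_le_div_of_nonneg_left hε.le (by norm_num) h4
    -- analytic part
    have hsqS0 : (0:ℝ) < Real.sqrt S := Real.sqrt_pos.mpr hS0
    have hsqSt0 : (0:ℝ) < Real.sqrt St := Real.sqrt_pos.mpr hSt0
    have hsqS1 : 1 ≤ Real.sqrt S := by
      rw [show (1:ℝ) = Real.sqrt 1 by simp]
      exact Real.sqrt_le_sqrt hS1
    have hsqSt1 : 1 ≤ Real.sqrt St := by
      rw [show (1:ℝ) = Real.sqrt 1 by simp]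
      exact Real.sqrt_le_sqrt hSt1
    have hsqle : Real.sqrt S ≤ Real.sqrt St := Real.sqrt_le_sqrt hSSt
    have hsqSsq : Real.sqrt S ^ 2 = S := Real.sq_sqrt hS0.le
    have hsqStsq : Real.sqrt St ^ 2 = St := Real.sq_sqrt hSt0.le
    have hnx : Real.sqrt (∑ j, r j ^ 2) = Real.sqrt S * R := by
      rw [hsum, Real.sqrt_mul hS0.le, Real.sqrt_sq hRpos.le]
    set E1 : Fin (2^n) → ℂ := fun i => Complex.exp (θ i * Complex.I) *
      (((Real.cos (α i) - Real.cos (αt i)) / Real.sqrt S : ℝ) : ℂ) with hE1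
    set E2 : Fin (2^n) → ℂ := fun i => Complex.exp (θ i * Complex.I) *
      ((Real.cos (αt i) * (1 / Real.sqrt S - 1 / Real.sqrt St) : ℝ) : ℂ) with hE2
    set F : Fin (2^n) → ℂ := fun i => (Complex.exp (θ i * Complex.I) -
      Complex.exp (θt i * Complex.I)) * ((Real.cos (αt i) / Real.sqrt St : ℝ) : ℂ) with hF
    have hkey : ∀ i, x i / ((Real.sqrt (∑ j, r j ^ 2) : ℝ) : ℂ) - xt i
        = E1 i + E2 i + F i := by
      intro i
      rw [hx, hxt, hnx, hE1, hE2, hF]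
      have hri : r i = Real.cos (α i) * R := by rw [hcos]; field_simp
      rw [hri]
      have h1 : ((Real.sqrt S : ℝ) : ℂ) ≠ 0 := Complex.ofReal_ne_zero.mpr hsqS0.ne'
      have h2 : ((Real.sqrt St : ℝ) : ℂ) ≠ 0 := Complex.ofReal_ne_zero.mpr hsqSt0.ne'
      have h3 : ((R : ℝ) : ℂ) ≠ 0 := Complex.ofReal_ne_zero.mpr hRpos.ne'
      push_cast
      field_simp
      ring
    have hδe : ∀ i, |Real.cos (α i) - Real.cos (αt i)| ≤ δ := by
      intro i
      refine (abs_cos_sub_cos_le _ _).trans ?_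
      rw [abs_of_nonneg (by linarith [(hαt i).2.1])]
      linarith [(hαt i).2.2]
    -- bound for E1
    have hB1 : Real.sqrt (∑ i, ‖E1 i‖ ^ 2) ≤ (2:ℝ)^n * δ := by
      have habs : ∀ i, ‖E1 i‖ ^ 2 ≤ δ ^ 2 := by
        intro i
        rw [hE1]
        simp only [norm_mul, Complex.norm_exp_ofReal_mul_I, one_mul, Complex.norm_real, Real.norm_eq_abs]
        have h1 : |(Real.cos (α i) - Real.cos (αt i)) / Real.sqrt S| ≤ δ := by
          rw [abs_div, abs_of_nonneg (Real.sqrt_nonneg S)]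
          calc |Real.cos (α i) - Real.cos (αt i)| / Real.sqrt S
              ≤ |Real.cos (α i) - Real.cos (αt i)| := div_le_self (abs_nonneg _) hsqS1
            _ ≤ δ := hδe i
        exact pow_le_pow_left₀ (abs_nonneg _) h1 2
      calc Real.sqrt (∑ i, ‖E1 i‖ ^ 2)
          ≤ Real.sqrt (∑ _i : Fin (2^n), δ ^ 2) :=
            Real.sqrt_le_sqrt (Finset.sum_le_sum fun i _ => habs i)
        _ = Real.sqrt ((2:ℝ)^n * δ ^ 2) := by
            rw [Finset.sum_const, Finset.card_univ, Fintype.card_fin, nsmul_eq_mul]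
            push_cast
            ring_nf
        _ ≤ Real.sqrt (((2:ℝ)^n * δ) ^ 2) := by
            apply Real.sqrt_le_sqrt
            exact helper_pow_sq _ _ (by linarith [h2n2]) hδ0
        _ = (2:ℝ)^n * δ := Real.sqrt_sq (by positivity)
    -- bound for E2
    have hc0 : 0 ≤ 1 / Real.sqrt S - 1 / Real.sqrt St := by
      have h1 : 1 / Real.sqrt St ≤ 1 / Real.sqrt S :=
        one_div_le_one_div_of_le hsqS0 hsqle
      linarith
    have hStS : St - S ≤ (2:ℝ)^n * (2 * δ) := by
      have h1 : St - S = ∑ i, (Real.cos (αt i) ^ 2 - Real.cos (α i) ^ 2) := by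
        rw [hStdef, hSdef, Finset.sum_sub_distrib]
      rw [h1]
      calc ∑ i, (Real.cos (αt i) ^ 2 - Real.cos (α i) ^ 2)
          ≤ ∑ _i : Fin (2^n), 2 * δ := by
            refine Finset.sum_le_sum fun i _ => ?_
            have h2 := hδe i
            have h3 := hcosle i
            have h4 := hcost1 i
            have h5 := hcosnn i
            have h6 : Real.cos (αt i) - Real.cos (α i) ≤ δ := by
              rw [abs_sub_comm] at h2
              calc Real.cos (αt i) - Real.cos (α i)
                  ≤ |Real.cos (αt i) - Real.cos (α i)| := le_abs_self _
                _ ≤ δ := h2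
            exact helper_sq_diff _ _ _ h5 h3 h4 h6
        _ = (2:ℝ)^n * (2 * δ) := by
            rw [Finset.sum_const, Finset.card_univ, Fintype.card_fin, nsmul_eq_mul]
            push_cast
            ring
    have hB2 : Real.sqrt (∑ i, ‖E2 i‖ ^ 2) ≤ (2:ℝ)^n * δ := by
      have habs : ∀ i, ‖E2 i‖ ^ 2
          = Real.cos (αt i) ^ 2 * (1 / Real.sqrt S - 1 / Real.sqrt St) ^ 2 := by
        intro i
        rw [hE2]
        simp only [norm_mul, Complex.norm_exp_ofReal_mul_I, one_mul, Complex.norm_real, Real.norm_eq_abs]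
        rw [abs_of_nonneg (hcostnn i), abs_of_nonneg hc0]
        ring
      have hsum2 : ∑ i, ‖E2 i‖ ^ 2
          = St * (1 / Real.sqrt S - 1 / Real.sqrt St) ^ 2 := by
        simp only [habs]
        rw [← Finset.sum_mul, ← hStdef]
      rw [hsum2, Real.sqrt_mul hSt0.le, Real.sqrt_sq hc0]
      have he1 : Real.sqrt St * (1 / Real.sqrt S - 1 / Real.sqrt St)
          = (Real.sqrt St - Real.sqrt S) / Real.sqrt S := by
        field_simp
      rw [he1]
      calc (Real.sqrt St - Real.sqrt S) / Real.sqrt S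
          ≤ Real.sqrt St - Real.sqrt S := div_le_self (by linarith) hsqS1
        _ ≤ (St - S) / 2 := by
            have := helper_sqrt_diff (Real.sqrt S) (Real.sqrt St) hsqS1 hsqle
            rw [hsqSsq, hsqStsq] at this
            exact this
        _ ≤ (2:ℝ)^n * δ := by linarith [hStS]
    -- bound for F
    have hB3 : Real.sqrt (∑ i, ‖F i‖ ^ 2) ≤ η := by
      have habs : ∀ i, ‖F i‖ ^ 2 ≤ η ^ 2 * (Real.cos (αt i) ^ 2 / St) := by
        intro i
        rw [hF]
        simp only [norm_mul, Complex.norm_real, Real.norm_eq_abs]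
        rw [abs_of_nonneg (div_nonneg (hcostnn i) (Real.sqrt_nonneg St))]
        have h1 : ‖Complex.exp (θ i * Complex.I)
            - Complex.exp (θt i * Complex.I)‖ ≤ η :=
          (abs_exp_I_sub_exp_I_le _ _).trans (hθt i)
        have h2 : (Real.cos (αt i) / Real.sqrt St) ^ 2 = Real.cos (αt i) ^ 2 / St := by
          rw [div_pow, hsqStsq]
        have h3 : (0:ℝ) ≤ Real.cos (αt i) / Real.sqrt St :=
          div_nonneg (hcostnn i) (Real.sqrt_nonneg St)
        calc (‖Complex.exp (θ i * Complex.I) - Complex.exp (θt i * Complex.I)‖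
              * (Real.cos (αt i) / Real.sqrt St)) ^ 2
            = ‖Complex.exp (θ i * Complex.I) - Complex.exp (θt i * Complex.I)‖ ^ 2
              * (Real.cos (αt i) / Real.sqrt St) ^ 2 := by ring
          _ ≤ η ^ 2 * (Real.cos (αt i) / Real.sqrt St) ^ 2 := by
              have h4 := norm_nonneg (Complex.exp (θ i * Complex.I)
                - Complex.exp (θt i * Complex.I))
              have h5 := helper_mul_sq _ _ _ h4 h1 h3
              linarith
          _ = η ^ 2 * (Real.cos (αt i) ^ 2 / St) := by rw [h2]
      have hsum3 : ∑ i, ‖F i‖ ^ 2 ≤ η ^ 2 := by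
        calc ∑ i, ‖F i‖ ^ 2
            ≤ ∑ i, η ^ 2 * (Real.cos (αt i) ^ 2 / St) :=
              Finset.sum_le_sum fun i _ => habs i
          _ = η ^ 2 * ((∑ i, Real.cos (αt i) ^ 2) / St) := by
              rw [← Finset.mul_sum, Finset.sum_div]
          _ = η ^ 2 := by rw [← hStdef, div_self hSt0.ne']; ring
      calc Real.sqrt (∑ i, ‖F i‖ ^ 2) ≤ Real.sqrt (η ^ 2) :=
            Real.sqrt_le_sqrt hsum3
        _ = η := Real.sqrt_sq hη0
    -- combine
    have htri : Real.sqrt (∑ i, ‖E1 i + E2 i + F i‖ ^ 2)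
        ≤ Real.sqrt (∑ i, ‖E1 i‖ ^ 2)
          + Real.sqrt (∑ i, ‖E2 i‖ ^ 2)
          + Real.sqrt (∑ i, ‖F i‖ ^ 2) := by
      calc Real.sqrt (∑ i, ‖E1 i + E2 i + F i‖ ^ 2)
          ≤ Real.sqrt (∑ i, ‖E1 i + E2 i‖ ^ 2)
            + Real.sqrt (∑ i, ‖F i‖ ^ 2) :=
            l2tri (fun i => E1 i + E2 i) F
        _ ≤ Real.sqrt (∑ i, ‖E1 i‖ ^ 2)
            + Real.sqrt (∑ i, ‖E2 i‖ ^ 2)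
            + Real.sqrt (∑ i, ‖F i‖ ^ 2) := by
            have := l2tri E1 E2
            linarith
    have hrw : Real.sqrt (∑ i, ‖x i / ((Real.sqrt (∑ j, r j ^ 2) : ℝ) : ℂ) - xt i‖ ^ 2)
        = Real.sqrt (∑ i, ‖E1 i + E2 i + F i‖ ^ 2) := by
      congr 1
      exact Finset.sum_congr rfl fun i _ => by rw [hkey i]
    rw [hrw]
    calc Real.sqrt (∑ i, ‖E1 i + E2 i + F i‖ ^ 2)
        ≤ ((2:ℝ)^n * δ) + ((2:ℝ)^n * δ) + η := by
          have := htri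
          linarith [hB1, hB2, hB3]
      _ ≤ ε/8 + ε/8 + ε/4 := by linarith [hδb, hηb]
      _ ≤ ε := by linarith
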